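/- Let n ≥ 1, α ∈ (1,2), ε ∈ (0,1), and let φ̃(x) = x₁^α − ε^α |x|^α on ℝⁿ. Then for every x ∈ ℝⁿ with x₁ > 0, the matrix D²φ̃(x) + α ε^α |x|^{α−2} Iₙ is positive semidefinite, where Iₙ is the n×n identity matrix. Explicitly, D²φ̃(x) = α(α−1)x₁^{α−2} e₁e₁ᵀ − α ε^α |x|^{α−2} Iₙ + α(2−α) ε^α |x|^{α−4} x xᵀ, and the sum of the first and third terms is positive semidefinite. -/

import Mathlib

open Real Set
open scoped Matrix

/-- The weight `φ̃(x) = x₁^α - ε^α |x|^α`. -/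
noncomputable def phit {n : ℕ} [NeZero n] (α ε : ℝ)
    (x : EuclideanSpace ℝ (Fin n)) : ℝ :=
  x 0 ^ α - ε ^ α * ‖x‖ ^ α

/-- The Hessian matrix of `f` at `x`: `(i, j) ↦ ∂ᵢ∂ⱼ f (x)`. -/
noncomputable def hess {n : ℕ} (f : EuclideanSpace ℝ (Fin n) → ℝ)
    (x : EuclideanSpace ℝ (Fin n)) : Matrix (Fin n) (Fin n) ℝ :=
  Matrix.of fun i j =>
    fderiv ℝ (fun y => fderiv ℝ f y (EuclideanSpace.single j 1)) x
      (EuclideanSpace.single i 1)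

/-- Derivative of `‖·‖ ^ p` at a nonzero point, for arbitrary real `p`. -/
theorem myNormRpowDeriv {E : Type*} [NormedAddCommGroup E] [InnerProductSpace ℝ E]
    {x : E} (hx : x ≠ 0) (p : ℝ) :
    HasFDerivAt (fun y : E ↦ ‖y‖ ^ p) ((p * ‖x‖ ^ (p - 2)) • innerSL ℝ x) x := by
  apply HasStrictFDerivAt.hasFDerivAt
  convert (hasStrictFDerivAt_norm_sq x).rpow_const (p := p / 2) (Or.inl (by simp [hx])) using 0
  simp_rw [← Real.rpow_natCast_mul (norm_nonneg _), ← Nat.cast_smul_eq_nsmul ℝ, smul_smul]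
  ring_nf

theorem phit_fderiv {n : ℕ} [NeZero n] (α ε : ℝ)
    {y : EuclideanSpace ℝ (Fin n)} (hy : 0 < y 0) :
    HasFDerivAt (phit α ε)
      ((α * y 0 ^ (α - 1)) •
          (EuclideanSpace.proj (0 : Fin n) : EuclideanSpace ℝ (Fin n) →L[ℝ] ℝ)
        - (ε ^ α * (α * ‖y‖ ^ (α - 2))) • innerSL ℝ y) y := by
  have hy0 : y ≠ 0 := by
    intro h; rw [h] at hy; simp at hy
  have h1 : HasFDerivAt (fun z : EuclideanSpace ℝ (Fin n) => z 0 ^ α)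
      ((α * y 0 ^ (α - 1)) •
        (EuclideanSpace.proj (0 : Fin n) : EuclideanSpace ℝ (Fin n) →L[ℝ] ℝ)) y := by
    have h := HasDerivAt.comp_hasFDerivAt (𝕜 := ℝ) y
      (Real.hasDerivAt_rpow_const (x := y 0) (p := α) (Or.inl hy.ne'))
      (EuclideanSpace.proj (0 : Fin n)).hasFDerivAt
    simpa [Function.comp_def] using h
  have h2 : HasFDerivAt (fun z : EuclideanSpace ℝ (Fin n) => ε ^ α * ‖z‖ ^ α)
      ((ε ^ α * (α * ‖y‖ ^ (α - 2))) • innerSL ℝ y) y := by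
    have h := (myNormRpowDeriv hy0 α).const_mul (ε ^ α)
    simpa [smul_smul, mul_assoc] using h
  exact h1.sub h2

set_option maxHeartbeats 1000000 in
theorem hess_entry {n : ℕ} [NeZero n] (α ε : ℝ)
    {x : EuclideanSpace ℝ (Fin n)} (hx : 0 < x 0) (i j : Fin n) :
    hess (phit α ε) x i j =
      α * (α - 1) * x 0 ^ (α - 2) *
        ((if (0 : Fin n) = i then (1:ℝ) else 0) * (if (0 : Fin n) = j then (1:ℝ) else 0))
      - α * ε ^ α * ‖x‖ ^ (α - 2) * (if i = j then (1:ℝ) else 0)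
      + α * (2 - α) * ε ^ α * ‖x‖ ^ (α - 4) * (x i * x j) := by
  have hx0 : x ≠ 0 := by
    intro h; rw [h] at hx; simp at hx
  have hU : ∀ᶠ y in nhds x, 0 < y 0 := by
    have hcont : Continuous fun y : EuclideanSpace ℝ (Fin n) => y 0 := (EuclideanSpace.proj (0 : Fin n)).continuous
    exact hcont.continuousAt.eventually_const_lt hx
  set cj : ℝ := if (0 : Fin n) = j then (1:ℝ) else 0 with hcj
  have hEq : (fun y : EuclideanSpace ℝ (Fin n) =>
        fderiv ℝ (phit α ε) y (EuclideanSpace.single j 1)) =ᶠ[nhds x]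
      fun y => (α * cj) * y 0 ^ (α - 1) - (ε ^ α * α) * (‖y‖ ^ (α - 2) * y j) := by
    filter_upwards [hU] with y hy
    rw [(phit_fderiv α ε hy).fderiv]
    simp [hcj, EuclideanSpace.single_apply, real_inner_comm, EuclideanSpace.inner_single_right]
    ring
  have hA : HasFDerivAt (fun y : EuclideanSpace ℝ (Fin n) => (α * cj) * y 0 ^ (α - 1))
      ((α * cj) • (((α - 1) * x 0 ^ (α - 1 - 1)) •
        (EuclideanSpace.proj (0 : Fin n) : EuclideanSpace ℝ (Fin n) →L[ℝ] ℝ))) x := by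
    have h := HasDerivAt.comp_hasFDerivAt (𝕜 := ℝ) x
      (Real.hasDerivAt_rpow_const (x := x 0) (p := α - 1) (Or.inl hx.ne'))
      (EuclideanSpace.proj (0 : Fin n)).hasFDerivAt
    exact h.const_mul (α * cj)
  have hB : HasFDerivAt (fun y : EuclideanSpace ℝ (Fin n) => (ε ^ α * α) * (‖y‖ ^ (α - 2) * y j))
      ((ε ^ α * α) • (‖x‖ ^ (α - 2) •
          (EuclideanSpace.proj (j : Fin n) : EuclideanSpace ℝ (Fin n) →L[ℝ] ℝ)
        + x j • (((α - 2) * ‖x‖ ^ (α - 2 - 2)) • innerSL ℝ x))) x := by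
    exact ((myNormRpowDeriv hx0 (α - 2)).mul
      (EuclideanSpace.proj (j : Fin n)).hasFDerivAt).const_mul (ε ^ α * α)
  have hmain : hess (phit α ε) x i j = (((α * cj) • (((α - 1) * x 0 ^ (α - 1 - 1)) •
        (EuclideanSpace.proj (0 : Fin n) : EuclideanSpace ℝ (Fin n) →L[ℝ] ℝ)))
      - ((ε ^ α * α) • (‖x‖ ^ (α - 2) •
          (EuclideanSpace.proj (j : Fin n) : EuclideanSpace ℝ (Fin n) →L[ℝ] ℝ)
        + x j • (((α - 2) * ‖x‖ ^ (α - 2 - 2)) • innerSL ℝ x))))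
      (EuclideanSpace.single i 1) := by
    show fderiv ℝ (fun y => fderiv ℝ (phit α ε) y (EuclideanSpace.single j 1)) x
      (EuclideanSpace.single i 1) = _
    rw [hEq.fderiv_eq]
    exact congrArg (fun L => L (EuclideanSpace.single i 1)) (hA.sub hB).fderiv
  rw [hmain]
  have h1 : α - 1 - 1 = α - 2 := by ring
  have h2 : α - 2 - 2 = α - 4 := by ring
  rw [h1, h2]
  simp only [ContinuousLinearMap.sub_apply, ContinuousLinearMap.smul_apply,
    ContinuousLinearMap.add_apply, smul_eq_mul, PiLp.proj_apply,
    EuclideanSpace.single_apply, innerSL_apply_apply, EuclideanSpace.inner_single_right,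
    RCLike.star_def, conj_trivial, mul_one]
  by_cases hij : i = j
  · subst hij
    by_cases hi : (0 : Fin n) = i <;> simp_all [hcj] <;> ring
  · have hji : ¬ j = i := fun h => hij h.symm
    by_cases hi : (0 : Fin n) = i <;> by_cases hj : (0 : Fin n) = j <;>
      simp_all [hcj] <;> ring

set_option maxHeartbeats 1000000 in
theorem psd_smul_vecMulVec {n : ℕ} {c : ℝ} (hc : 0 ≤ c) (v : Fin n → ℝ) :
    (c • Matrix.vecMulVec v v).PosSemidef := by
  rw [Matrix.posSemidef_iff_dotProduct_mulVec]
  constructor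
  · unfold Matrix.IsHermitian
    ext i j
    simp only [Matrix.conjTranspose_apply, Matrix.smul_apply, Matrix.vecMulVec_apply,
      star_trivial, smul_eq_mul]
    ring
  · intro w
    have h1 : (Matrix.vecMulVec v v) *ᵥ w = (dotProduct v w) • v := by
      ext i
      simp only [Matrix.mulVec, Matrix.vecMulVec_apply, dotProduct, Pi.smul_apply,
        smul_eq_mul, Finset.sum_mul]
      exact Finset.sum_congr rfl fun k _ => by ring
    rw [Matrix.smul_mulVec, h1, smul_smul]
    simp only [star_trivial, dotProduct_smul, smul_eq_mul]
    rw [dotProduct_comm, mul_assoc]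
    exact mul_nonneg hc (mul_self_nonneg _)

theorem std_eq_vecMulVec {n : ℕ} [NeZero n] :
    (Matrix.single (0 : Fin n) (0 : Fin n) (1 : ℝ)) =
      Matrix.vecMulVec (Pi.single (0 : Fin n) (1:ℝ)) (Pi.single (0 : Fin n) (1:ℝ)) := by
  ext i j
  simp [Matrix.single, Matrix.vecMulVec_apply, Pi.single_apply]
  aesop

/-- The Hessian of `φ̃(x) = x₁^α - ε^α |x|^α` equals
`α(α-1) x₁^{α-2} e₁e₁ᵀ - α ε^α |x|^{α-2} Iₙ + α(2-α) ε^α |x|^{α-4} x xᵀ`;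
the sum of the first and third terms is positive semidefinite, and consequently
`D²φ̃(x) + α ε^α |x|^{α-2} Iₙ` is positive semidefinite. -/
theorem hessian_psd (n : ℕ) [NeZero n] (hn : 1 ≤ n) (α ε : ℝ)
    (hα : α ∈ Set.Ioo (1 : ℝ) 2) (hε : ε ∈ Set.Ioo (0 : ℝ) 1)
    (x : EuclideanSpace ℝ (Fin n)) (hx : 0 < x 0) :
    hess (phit α ε) x =
        (α * (α - 1) * x 0 ^ (α - 2)) •
            Matrix.single (0 : Fin n) (0 : Fin n) (1 : ℝ)
          - (α * ε ^ α * ‖x‖ ^ (α - 2)) • (1 : Matrix (Fin n) (Fin n) ℝ)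
          + (α * (2 - α) * ε ^ α * ‖x‖ ^ (α - 4)) •
              Matrix.vecMulVec (fun i => x i) (fun i => x i) ∧
      ((α * (α - 1) * x 0 ^ (α - 2)) •
            Matrix.single (0 : Fin n) (0 : Fin n) (1 : ℝ)
          + (α * (2 - α) * ε ^ α * ‖x‖ ^ (α - 4)) •
              Matrix.vecMulVec (fun i => x i) (fun i => x i)).PosSemidef ∧
      (hess (phit α ε) x +
          (α * ε ^ α * ‖x‖ ^ (α - 2)) • (1 : Matrix (Fin n) (Fin n) ℝ)).PosSemidef := by
  obtain ⟨hα1, hα2⟩ := hα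
  obtain ⟨hε0, hε1⟩ := hε
  have hx0 : x ≠ 0 := by
    intro h; rw [h] at hx; simp at hx
  have hxn : (0:ℝ) < ‖x‖ := norm_pos_iff.mpr hx0
  have hc1 : 0 ≤ α * (α - 1) * x 0 ^ (α - 2) :=
    mul_nonneg (mul_nonneg (by linarith) (by linarith)) (Real.rpow_pos_of_pos hx _).le
  have hc3 : 0 ≤ α * (2 - α) * ε ^ α * ‖x‖ ^ (α - 4) :=
    mul_nonneg (mul_nonneg (mul_nonneg (by linarith) (by linarith))
      (Real.rpow_pos_of_pos hε0 _).le) (Real.rpow_pos_of_pos hxn _).le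
  have heq : hess (phit α ε) x =
        (α * (α - 1) * x 0 ^ (α - 2)) •
            Matrix.single (0 : Fin n) (0 : Fin n) (1 : ℝ)
          - (α * ε ^ α * ‖x‖ ^ (α - 2)) • (1 : Matrix (Fin n) (Fin n) ℝ)
          + (α * (2 - α) * ε ^ α * ‖x‖ ^ (α - 4)) •
              Matrix.vecMulVec (fun i => x i) (fun i => x i) := by
    ext i j
    rw [hess_entry α ε hx i j]
    simp only [Matrix.add_apply, Matrix.sub_apply, Matrix.smul_apply,
      Matrix.single, Matrix.of_apply, Matrix.one_apply,
      Matrix.vecMulVec_apply, smul_eq_mul]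
    by_cases hi : (0 : Fin n) = i <;> by_cases hj : (0 : Fin n) = j <;>
      by_cases hij : i = j <;> simp_all <;> ring
  have hpsd : ((α * (α - 1) * x 0 ^ (α - 2)) •
        Matrix.single (0 : Fin n) (0 : Fin n) (1 : ℝ)
      + (α * (2 - α) * ε ^ α * ‖x‖ ^ (α - 4)) •
          Matrix.vecMulVec (fun i => x i) (fun i => x i)).PosSemidef := by
    rw [std_eq_vecMulVec]
    exact (psd_smul_vecMulVec hc1 _).add (psd_smul_vecMulVec hc3 _)
  refine ⟨heq, hpsd, ?_⟩
  have : hess (phit α ε) x + (α * ε ^ α * ‖x‖ ^ (α - 2)) • (1 : Matrix (Fin n) (Fin n) ℝ)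
      = (α * (α - 1) * x 0 ^ (α - 2)) •
            Matrix.single (0 : Fin n) (0 : Fin n) (1 : ℝ)
          + (α * (2 - α) * ε ^ α * ‖x‖ ^ (α - 4)) •
              Matrix.vecMulVec (fun i => x i) (fun i => x i) := by
    rw [heq]; abel
  rw [this]
  exact hpsd
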